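/- Recursive definitions via the linear fixed-point combinator unfold correctly: if t ≡ (λ!f.u), then (fix !t) reduces in finitely many steps of the register reduction rules of λ_q to u[(fix !t)/f], where fix ≡ ((λ!u.λ!f.(f !((u !u) !f))) !(λ!u.λ!f.(f !((u !u) !f)))). -/
import Mathlib


namespace LambdaQ

/-- Constants of the quantum lambda calculus: bits, gate symbols, placeholder. -/
inductive Const where
  | zero | one | hadamard | phaseS | gateR | cnot | gateX | gateY | gateZ | placeholder
  deriving DecidableEq

/-- Terms of the quantum lambda calculus λ_q. -/
inductive Term where
  | var (x : ℕ)
  | lam (x : ℕ) (body : Term)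
  | app (t₁ t₂ : Term)
  | const (c : Const)
  | bang (t : Term)
  | lamBang (x : ℕ) (body : Term)
  deriving DecidableEq

open Term

/-- The placeholder symbol ⊥. -/
def ph : Term := const .placeholder

def freeVars : Term → Finset ℕ
  | var x => {x}
  | lam x b => freeVars b \ {x}
  | app a b => freeVars a ∪ freeVars b
  | const _ => ∅
  | bang t => freeVars t
  | lamBang x b => freeVars b \ {x}

def allVars : Term → Finset ℕ
  | var x => {x}
  | lam x b => insert x (allVars b)
  | app a b => allVars a ∪ allVars b
  | const _ => ∅
  | bang t => allVars t
  | lamBang x b => insert x (allVars b)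

/-- Naive renaming of free occurrences of `y` by `z`. -/
def rename (y z : ℕ) : Term → Term
  | var x => if x = y then var z else var x
  | lam x b => if x = y then lam x b else lam x (rename y z b)
  | app a b => app (rename y z a) (rename y z b)
  | const c => const c
  | bang t => bang (rename y z t)
  | lamBang x b => if x = y then lamBang x b else lamBang x (rename y z b)

def size : Term → ℕ
  | var _ => 1
  | lam _ b => size b + 1
  | app a b => size a + size b + 1
  | const _ => 1
  | bang t => size t + 1
  | lamBang _ b => size b + 1

theorem size_rename (y z : ℕ) : ∀ t, size (rename y z t) = size t := by
  intro t
  induction t with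
  | var x => simp only [rename]; split <;> rfl
  | lam x b ih => simp only [rename]; split <;> simp [size, ih]
  | app a b iha ihb => simp [rename, size, iha, ihb]
  | const c => rfl
  | bang t ih => simp [rename, size, ih]
  | lamBang x b ih => simp only [rename]; split <;> simp [size, ih]

/-- A variable not occurring in the finite set `s`. -/
def fresh (s : Finset ℕ) : ℕ := (s.sup id) + 1

/-- Capture-avoiding substitution `subst v x t = t[v/x]`. -/
def subst (v : Term) (x : ℕ) : Term → Term
  | var y => if y = x then v else var y
  | const c => const c
  | app a b => app (subst v x a) (subst v x b)
  | bang t => bang (subst v x t)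
  | lam y b =>
      if y = x then lam y b
      else if y ∈ freeVars v ∧ x ∈ freeVars b then
        lam (fresh (allVars b ∪ freeVars v ∪ {x}))
          (subst v x (rename y (fresh (allVars b ∪ freeVars v ∪ {x})) b))
      else lam y (subst v x b)
  | lamBang y b =>
      if y = x then lamBang y b
      else if y ∈ freeVars v ∧ x ∈ freeVars b then
        lamBang (fresh (allVars b ∪ freeVars v ∪ {x}))
          (subst v x (rename y (fresh (allVars b ∪ freeVars v ∪ {x})) b))
      else lamBang y (subst v x b)
  termination_by t => size t
  decreasing_by all_goals (simp [size, size_rename]; try omega)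

/-- Values of λ_q: variables, constants, abstractions, !-suspensions. -/
def IsValue : Term → Prop
  | var _ => True
  | const _ => True
  | lam _ _ => True
  | lamBang _ _ => True
  | bang _ => True
  | app _ _ => False

/-- The skeleton Ē_x: replace every maximal subterm not containing x free
by the placeholder ⊥, keeping x. -/
def skel (x : ℕ) : Term → Term
  | var y => if y = x then var y else ph
  | lam y b => if y ≠ x ∧ x ∈ freeVars b then lam y (skel x b) else ph
  | lamBang y b => if y ≠ x ∧ x ∈ freeVars b then lamBang y (skel x b) else ph
  | app a b => if x ∈ freeVars a ∪ freeVars b then app (skel x a) (skel x b) else ph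
  | bang t => if x ∈ freeVars t then bang (skel x t) else ph
  | const _ => ph

/-- Scott-encoded empty list  nil ≡ λ!x.λ!y.(x id). -/
def idT : Term := lam 20 (var 20)
def nilT : Term := lamBang 0 (lamBang 1 (app (var 0) idT))
/-- cons ≡ λh.λt.λ!x.λ!y.((y h) t). -/
def consT : Term := lam 2 (lam 3 (lamBang 0 (lamBang 1 (app (app (var 1) (var 2)) (var 3)))))
/-- The (unevaluated) pair (a, b) ≡ cons a (cons b nil). -/
def pairE (a b : Term) : Term := app (app consT a) (app (app consT b) nilT)
/-- The evaluated form of (cons a b). -/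
def pairV (a b : Term) : Term := lamBang 0 (lamBang 1 (app (app (var 1) a) b))
/-- The evaluated pair value (a, b). -/
def mkPair (a b : Term) : Term := pairV a (pairV b nilT)

/-- The bit constants. -/
def bit : Bool → Term := fun b => const (if b then .one else .zero)

/-- Output of the Hadamard gate on a bit. -/
noncomputable def hadOut : Bool → (Term →₀ ℂ)
  | false => (Real.sqrt 2 : ℂ)⁻¹ • (Finsupp.single (bit false) 1 + Finsupp.single (bit true) 1)
  | true  => (Real.sqrt 2 : ℂ)⁻¹ • (Finsupp.single (bit false) 1 - Finsupp.single (bit true) 1)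

/-- Action of the primitive gate symbols on (encoded) bit values:
`GateApp g φ s` means U|φ⟩ = s for the unitary U named by g. -/
inductive GateApp : Const → Term → (Term →₀ ℂ) → Prop
  | had (b : Bool) : GateApp .hadamard (bit b) (hadOut b)
  | gX (b : Bool) : GateApp .gateX (bit b) (Finsupp.single (bit !b) 1)
  | gY (b : Bool) : GateApp .gateY (bit b)
      ((if b then -Complex.I else Complex.I) • Finsupp.single (bit !b) 1)
  | gZ (b : Bool) : GateApp .gateZ (bit b)
      ((if b then (-1 : ℂ) else 1) • Finsupp.single (bit b) 1)
  | gS (b : Bool) : GateApp .phaseS (bit b)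
      ((if b then Complex.I else 1) • Finsupp.single (bit b) 1)
  | gR (b : Bool) : GateApp .gateR (bit b)
      ((if b then Complex.exp (Complex.I * Real.pi / 4) else 1) • Finsupp.single (bit b) 1)
  | gCnot (a b : Bool) : GateApp .cnot (mkPair (bit a) (bit b))
      (Finsupp.single (mkPair (bit a) (bit (xor a b))) 1)

/-- One step of reduction of a term, producing a history entry and a
superposition of resulting terms (operational model of λ_q). -/
inductive SubStep : Term → Term → (Term →₀ ℂ) → Prop
  | app1 {t₁ h s} (t₂) : SubStep t₁ h s →
      SubStep (app t₁ t₂) (app h ph) (s.mapDomain fun u => app u t₂)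
  | app2 {v t₂ h s} : IsValue v → SubStep t₂ h s →
      SubStep (app v t₂) (app ph h) (s.mapDomain fun u => app v u)
  | beta {x E v} : IsValue v →
      SubStep (app (lam x E) v) (app (lam x (skel x E)) ph) (Finsupp.single (subst v x E) 1)
  | bangBeta1 {x E t'} : x ∈ freeVars E →
      SubStep (app (lamBang x E) (bang t')) (app (lamBang x (skel x E)) ph)
        (Finsupp.single (subst t' x E) 1)
  | bangBeta2 {x E t'} : x ∉ freeVars E →
      SubStep (app (lamBang x E) (bang t')) (app (lamBang x ph) (bang t')) (Finsupp.single E 1)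
  | gate {g φ s} : GateApp g φ s →
      SubStep (app (const g) φ) (app (const g) ph) s

/-- A configuration: history track followed by the computational register. -/
abbrev Config := List Term × Term

/-- A state: finitely supported complex linear combination of configurations. -/
abbrev QState := Config →₀ ℂ

/-- One step of the operational model on a single configuration, producing a state. -/
inductive ConfStep : Config → QState → Prop
  | sub {H t h s} : SubStep t h s →
      ConfStep (H, t) (s.mapDomain fun u => (H ++ [h], u))
  | idStep {H t} : (∀ h s, ¬ SubStep t h s) →
      ConfStep (H, t) (Finsupp.single (H ++ [ph], t) 1)

/-- One step of the operational model of λ_q, extended linearly to states. -/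
def StateStep (ψ ψ' : QState) : Prop :=
  ∃ F : Config → QState, (∀ c ∈ ψ.support, ConfStep c (F c)) ∧
    ψ' = ψ.sum fun c a => a • F c

/-- The register reduction rules of λ_q on a single term, producing a
superposition of terms. -/
inductive RegStep : Term → (Term →₀ ℂ) → Prop
  | app1 {t₁ s} (t₂) : RegStep t₁ s → RegStep (app t₁ t₂) (s.mapDomain fun u => app u t₂)
  | app2 {v t₂ s} : IsValue v → RegStep t₂ s → RegStep (app v t₂) (s.mapDomain fun u => app v u)
  | beta {x E v} : IsValue v → RegStep (app (lam x E) v) (Finsupp.single (subst v x E) 1)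
  | bangBeta {x E t'} : RegStep (app (lamBang x E) (bang t')) (Finsupp.single (subst t' x E) 1)
  | gate {g φ s} : GateApp g φ s → RegStep (app (const g) φ) s

/-- The register reduction rules extended linearly to superpositions of terms. -/
def RegStepS (c c' : Term →₀ ℂ) : Prop :=
  ∃ F : Term → (Term →₀ ℂ), (∀ t ∈ c.support, RegStep t (F t)) ∧
    c' = c.sum fun t a => a • F t

/-- Congruence of terms: they coincide symbol by symbol except possibly at
positions containing the constants 0 or 1. -/
inductive Congr : Term → Term → Prop
  | bit {c c'} : (c = .zero ∨ c = .one) → (c' = .zero ∨ c' = .one) →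
      Congr (const c) (const c')
  | var (x) : Congr (var x) (var x)
  | const (c) : Congr (const c) (const c)
  | lam {b b'} (x) : Congr b b' → Congr (lam x b) (lam x b')
  | lamBang {b b'} (x) : Congr b b' → Congr (lamBang x b) (lamBang x b')
  | app {a a' b b'} : Congr a a' → Congr b b' → Congr (app a b) (app a' b')
  | bang {t t'} : Congr t t' → Congr (bang t) (bang t')


/-- θ ≡ λ!u.λ!f.(f !((u !u) !f)), with u = var 0 and f = var 1. -/
def theta : Term :=
  .lamBang 0 (.lamBang 1
    (.app (.var 1) (.bang (.app (.app (.var 0) (.bang (.var 0))) (.bang (.var 1))))))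

/-- The linear Turing fixed-point combinator fix ≡ (θ !θ). -/
def fixT : Term := .app theta (.bang theta)

/-- Recursive definitions via the linear fixed-point
combinator unfold correctly: if t ≡ (λ!f.u), then (fix !t) reduces in finitely
many steps of the register reduction rules of λ_q to u[(fix !t)/f]. -/
lemma regStepS_single {t : Term} {s : Term →₀ ℂ} (h : RegStep t s) :
    RegStepS (Finsupp.single t 1) s := by
  refine ⟨fun _ => s, ?_, ?_⟩
  · intro c hc
    rw [Finsupp.support_single_ne_zero _ one_ne_zero, Finset.mem_singleton] at hc
    subst hc; exact h
  · rw [Finsupp.sum_single_index] <;> simp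

theorem fix_recursion (f : ℕ) (u : Term) :
    Relation.ReflTransGen RegStepS
      (Finsupp.single (Term.app fixT (.bang (.lamBang f u))) (1 : ℂ))
      (Finsupp.single (subst (Term.app fixT (.bang (.lamBang f u))) f u) (1 : ℂ)) := by
  set t : Term := .lamBang f u with ht
  set M1 : Term := .lamBang 1 (.app (.var 1) (.bang (.app fixT (.bang (.var 1))))) with hM1
  have e1 : subst theta 0 (.lamBang 1
      (.app (.var 1) (.bang (.app (.app (.var 0) (.bang (.var 0))) (.bang (.var 1)))))) = M1 := by
    simp [subst, theta, fixT, freeVars, hM1]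
  have e2 : subst t 1 (.app (.var 1) (.bang (.app fixT (.bang (.var 1)))))
      = .app t (.bang (.app fixT (.bang t))) := by
    simp [subst, fixT, theta, freeVars]
  have step1 : RegStepS (Finsupp.single (Term.app fixT (.bang t)) (1 : ℂ))
      (Finsupp.single (Term.app M1 (.bang t)) (1 : ℂ)) := by
    have h : RegStep (Term.app fixT (.bang t))
        ((Finsupp.single (subst theta 0 (.lamBang 1
          (.app (.var 1) (.bang (.app (.app (.var 0) (.bang (.var 0))) (.bang (.var 1)))))) ) (1:ℂ)).mapDomain
          (fun w => Term.app w (.bang t))) := by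
      exact RegStep.app1 _ RegStep.bangBeta
    rw [Finsupp.mapDomain_single, e1] at h
    exact regStepS_single h
  have step2 : RegStepS (Finsupp.single (Term.app M1 (.bang t)) (1 : ℂ))
      (Finsupp.single (Term.app t (.bang (.app fixT (.bang t)))) (1 : ℂ)) := by
    have h := @RegStep.bangBeta 1 (.app (.var 1) (.bang (.app fixT (.bang (.var 1))))) t
    rw [e2] at h
    exact regStepS_single h
  have step3 : RegStepS (Finsupp.single (Term.app t (.bang (.app fixT (.bang t)))) (1 : ℂ))
      (Finsupp.single (subst (Term.app fixT (.bang t)) f u) (1 : ℂ)) :=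
    regStepS_single RegStep.bangBeta
  exact .head step1 (.head step2 (.head step3 .refl))

end LambdaQ
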